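/- Let Q be a Borel probability measure on ℝ^p with Q([−M,M]^p) = 1. Then there exists Θ₀ ∈ ([−M,M]^p)^k such that ∫ f_{Θ₀} dQ ≤ ∫ f_Θ dQ for every Θ ∈ (ℝ^p)^k; in particular the infimum of Θ ↦ ∫ f_Θ dQ over all of (ℝ^p)^k equals its infimum over ([−M,M]^p)^k, and this infimum is attained at a point of ([−M,M]^p)^k. -/

import Mathlib

open MeasureTheory ProbabilityTheory Real Filter
open scoped ENNReal

/-- Bregman divergence generated by a differentiable function `φ`. -/
noncomputable def dphi {p : ℕ} (φ : EuclideanSpace ℝ (Fin p) → ℝ)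
    (x y : EuclideanSpace ℝ (Fin p)) : ℝ :=
  φ x - φ y - inner ℝ (gradient φ y) (x - y)

/-- The cube `[-M, M]^p` in `ℝ^p`. -/
def cube (p : ℕ) (M : ℝ) : Set (EuclideanSpace ℝ (Fin p)) := {x | ∀ i, |x i| ≤ M}

/-- The clustering objective `f_Θ(x) = Ψ(d_φ(x,θ₁),…,d_φ(x,θ_k))`. -/
noncomputable def fTheta {p k : ℕ} (φ : EuclideanSpace ℝ (Fin p) → ℝ)
    (Ψ : (Fin k → ℝ) → ℝ) (Θ : Fin k → EuclideanSpace ℝ (Fin p))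
    (x : EuclideanSpace ℝ (Fin p)) : ℝ :=
  Ψ (fun j => dphi φ x (Θ j))



section aux
variable {p : ℕ} {φ : EuclideanSpace ℝ (Fin p) → ℝ} {M : ℝ}

lemma inner_gradient_eq (y v : EuclideanSpace ℝ (Fin p)) :
    (inner ℝ (gradient φ y) v : ℝ) = fderiv ℝ φ y v := by
  rw [gradient, InnerProductSpace.toDual_symm_apply]

lemma line_hasDerivAt (y d : EuclideanSpace ℝ (Fin p)) (t : ℝ) :
    HasDerivAt (fun t : ℝ => t • d + y) d t := by
  simpa using ((hasDerivAt_id t).smul_const d).add_const y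

lemma phi_dir_hasDerivAt (hφ : Differentiable ℝ φ) (y d : EuclideanSpace ℝ (Fin p)) :
    HasDerivAt (fun t : ℝ => φ (t • d + y)) (fderiv ℝ φ y d) 0 := by
  have h0 : (0:ℝ) • d + y = y := by simp
  have hf : HasFDerivAt φ (fderiv ℝ φ y) ((0:ℝ) • d + y) := by
    rw [h0]; exact (hφ y).hasFDerivAt
  exact hf.comp_hasDerivAt 0 (line_hasDerivAt y d 0)

lemma phi_dir_convex (hconv : ConvexOn ℝ Set.univ φ) (y d : EuclideanSpace ℝ (Fin p)) :
    ConvexOn ℝ Set.univ (fun t : ℝ => φ (t • d + y)) := by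
  have h := hconv.comp_affineMap (AffineMap.lineMap y (y + d) (k := ℝ))
  rw [Set.preimage_univ] at h
  have he : (fun t : ℝ => φ (t • d + y)) = φ ∘ ⇑(AffineMap.lineMap y (y + d) (k := ℝ)) := by
    funext t; simp [AffineMap.lineMap_apply]
  rw [he]; exact h

lemma dphi_nonneg (hconv : ConvexOn ℝ Set.univ φ) (hφ : Differentiable ℝ φ)
    (x y : EuclideanSpace ℝ (Fin p)) : 0 ≤ dphi φ x y := by
  have h := (phi_dir_convex hconv y (x - y)).le_slope_of_hasDerivAt (Set.mem_univ 0)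
    (Set.mem_univ 1) zero_lt_one (phi_dir_hasDerivAt hφ y (x - y))
  have hs : slope (fun t : ℝ => φ (t • (x - y) + y)) 0 1 = φ x - φ y := by
    simp [slope_def_field]
  rw [hs] at h
  have hi : (inner ℝ (gradient φ y) (x - y) : ℝ) = fderiv ℝ φ y (x - y) :=
    inner_gradient_eq y (x - y)
  unfold dphi
  rw [hi]
  linarith

lemma dphi_diff_eq (x θ θ' : EuclideanSpace ℝ (Fin p)) :
    dphi φ x θ - dphi φ x θ' =
      dphi φ θ' θ + inner ℝ (gradient φ θ' - gradient φ θ) (x - θ') := by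
  simp only [dphi, inner_sub_left, inner_sub_right]
  ring

lemma dphi_add_dphi (x y : EuclideanSpace ℝ (Fin p)) :
    dphi φ x y + dphi φ y x = inner ℝ (gradient φ x - gradient φ y) (x - y) := by
  simp only [dphi, inner_sub_left, inner_sub_right, real_inner_comm (gradient φ y)]
  ring

/-! cube facts -/

lemma zero_mem_cube (hM : 0 ≤ M) : (0 : EuclideanSpace ℝ (Fin p)) ∈ cube p M := by
  intro i
  have h0 : (0 : EuclideanSpace ℝ (Fin p)) i = 0 := rfl
  rw [h0, abs_zero]
  exact hM

lemma convex_cube : Convex ℝ (cube p M) := by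
  intro x hx y hy a b ha hb hab i
  have hxy : (a • x + b • y) i = a * x i + b * y i := rfl
  rw [hxy]
  calc |a * x i + b * y i| ≤ |a * x i| + |b * y i| := abs_add_le _ _
    _ = a * |x i| + b * |y i| := by rw [abs_mul, abs_mul, abs_of_nonneg ha, abs_of_nonneg hb]
    _ ≤ a * M + b * M := by
        gcongr
        exacts [hx i, hy i]
    _ = M := by rw [← add_mul, hab, one_mul]

lemma isClosed_cube : IsClosed (cube p M) := by
  have : cube p M = ⋂ i, {x : EuclideanSpace ℝ (Fin p) | |x i| ≤ M} := by
    ext x; simp [cube, Set.mem_iInter]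
  rw [this]
  exact isClosed_iInter fun i =>
    isClosed_le (EuclideanSpace.proj (𝕜 := ℝ) i).continuous.abs continuous_const

lemma norm_le_of_mem_cube (hM : 0 ≤ M) {x : EuclideanSpace ℝ (Fin p)}
    (hx : x ∈ cube p M) : ‖x‖ ≤ M * Real.sqrt p := by
  rw [EuclideanSpace.norm_eq]
  have h1 : ∑ i, ‖x i‖ ^ 2 ≤ ∑ _i : Fin p, M ^ 2 := by
    refine Finset.sum_le_sum fun i _ => ?_
    rw [Real.norm_eq_abs]
    exact pow_le_pow_left₀ (abs_nonneg _) (hx i) 2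
  have h2 : ∑ _i : Fin p, M ^ 2 = (p : ℝ) * M ^ 2 := by
    rw [Finset.sum_const, Finset.card_univ, Fintype.card_fin, nsmul_eq_mul]
  calc √(∑ i, ‖x i‖ ^ 2) ≤ √((p : ℝ) * M ^ 2) := by
        apply Real.sqrt_le_sqrt; rw [← h2]; exact h1
    _ = M * √p := by
        rw [mul_comm, Real.sqrt_mul (sq_nonneg M), Real.sqrt_sq hM]

lemma isCompact_cube (hM : 0 ≤ M) : IsCompact (cube p M) := by
  apply Metric.isCompact_of_isClosed_isBounded isClosed_cube
  exact isBounded_iff_forall_norm_le.mpr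
    ⟨M * Real.sqrt p, fun x hx => norm_le_of_mem_cube hM hx⟩

lemma norm_sub_le_of_mem_cube (hM : 0 ≤ M) {x y : EuclideanSpace ℝ (Fin p)}
    (hx : x ∈ cube p M) (hy : y ∈ cube p M) : ‖x - y‖ ≤ 2 * M * Real.sqrt p := by
  calc ‖x - y‖ ≤ ‖x‖ + ‖y‖ := norm_sub_le _ _
    _ ≤ M * Real.sqrt p + M * Real.sqrt p :=
        add_le_add (norm_le_of_mem_cube hM hx) (norm_le_of_mem_cube hM hy)
    _ = 2 * M * Real.sqrt p := by ring

end aux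

section proj
variable {p : ℕ} {φ : EuclideanSpace ℝ (Fin p) → ℝ} {M : ℝ}

lemma continuous_dphi_left (hφ : Differentiable ℝ φ) (θ : EuclideanSpace ℝ (Fin p)) :
    Continuous (fun y => dphi φ y θ) := by
  unfold dphi
  exact (hφ.continuous.sub continuous_const).sub
    (continuous_const.inner (continuous_id.sub continuous_const))

lemma exists_bregman_proj (hconv : ConvexOn ℝ Set.univ φ) (hφ : Differentiable ℝ φ)
    (hM : 0 ≤ M) (θ : EuclideanSpace ℝ (Fin p)) :
    ∃ θ' ∈ cube p M, ∀ x ∈ cube p M, dphi φ x θ' ≤ dphi φ x θ := by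
  obtain ⟨θ', hθ'mem, hmin⟩ := (isCompact_cube hM).exists_isMinOn ⟨0, zero_mem_cube hM⟩
    ((continuous_dphi_left hφ θ).continuousOn)
  refine ⟨θ', hθ'mem, fun x hx => ?_⟩
  set d := x - θ' with hd
  set c1 : ℝ := inner ℝ (gradient φ θ) d with hc1
  set c0 : ℝ := inner ℝ (gradient φ θ) (θ' - θ) with hc0
  set q : ℝ → ℝ := fun t => dphi φ (t • d + θ') θ with hq
  -- q as an explicit formula
  have hqeq : q = fun t => φ (t • d + θ') - φ θ - (c0 + t * c1) := by
    funext t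
    simp only [hq, dphi, hc0, hc1]
    have : t • d + θ' - θ = (θ' - θ) + t • d := by abel
    rw [this, inner_add_right, real_inner_smul_right]
  -- minimality on [0,1]
  have hq0 : ∀ t ∈ Set.Icc (0:ℝ) 1, q 0 ≤ q t := by
    intro t ht
    have he : t • d + θ' = (1 - t) • θ' + t • x := by
      simp only [hd, smul_sub]
      module
    have hmem : t • d + θ' ∈ cube p M := by
      rw [he]
      exact convex_cube hθ'mem hx (by linarith [ht.2]) ht.1 (by ring)
    have h0 : (0:ℝ) • d + θ' = θ' := by simp
    have := hmin hmem
    simpa [hq, h0] using this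
  -- derivative of q at 0
  have hderiv : HasDerivAt q (inner ℝ (gradient φ θ' - gradient φ θ) d) 0 := by
    rw [hqeq]
    have h1 : HasDerivAt (fun t : ℝ => φ (t • d + θ') - φ θ) (fderiv ℝ φ θ' d) 0 :=
      (phi_dir_hasDerivAt hφ θ' d).sub_const (φ θ)
    have h2 : HasDerivAt (fun t : ℝ => c0 + t * c1) c1 0 :=
      (hasDerivAt_mul_const c1).const_add c0
    have h3 := h1.sub h2
    have h4 : fderiv ℝ φ θ' d - c1 = inner ℝ (gradient φ θ' - gradient φ θ) d := by
      rw [inner_sub_left, inner_gradient_eq, hc1]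
    rw [← h4]
    exact h3
  -- variational inequality via one-sided slopes
  have key : (0:ℝ) ≤ inner ℝ (gradient φ θ' - gradient φ θ) d := by
    have hW : HasDerivWithinAt q (inner ℝ (gradient φ θ' - gradient φ θ) d) (Set.Ioi 0) 0 :=
      hderiv.hasDerivWithinAt
    rw [hasDerivWithinAt_iff_tendsto_slope] at hW
    have hIoi : Set.Ioi (0:ℝ) \ {0} = Set.Ioi 0 :=
      Set.diff_singleton_eq_self (by simp)
    rw [hIoi] at hW
    refine ge_of_tendsto hW ?_
    filter_upwards [self_mem_nhdsWithin,
      mem_nhdsWithin_of_mem_nhds (Iic_mem_nhds one_pos)] with t ht ht1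
    have htpos : (0:ℝ) < t := ht
    rw [slope_def_field]
    have := hq0 t ⟨htpos.le, ht1⟩
    have hnum : 0 ≤ q t - q 0 := by linarith
    have hden : 0 ≤ t - 0 := by linarith
    exact div_nonneg hnum hden
  -- conclude
  have hdiff := dphi_diff_eq (φ := φ) x θ θ'
  have hnn := dphi_nonneg hconv hφ θ' θ
  rw [← hd] at hdiff
  linarith

end proj

open scoped Topology

section lip
variable {p k : ℕ} {φ : EuclideanSpace ℝ (Fin p) → ℝ} {M : ℝ}

lemma dphi_lip (hconv : ConvexOn ℝ Set.univ φ) (hφ : Differentiable ℝ φ)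
    (hM : 0 ≤ M) {H : ℝ} (hH : 0 ≤ H)
    (hgradlip : ∀ x ∈ cube p M, ∀ y ∈ cube p M,
      ‖gradient φ x - gradient φ y‖ ≤ H * ‖x - y‖)
    {x θ θ' : EuclideanSpace ℝ (Fin p)}
    (hx : x ∈ cube p M) (hθ : θ ∈ cube p M) (hθ' : θ' ∈ cube p M) :
    |dphi φ x θ - dphi φ x θ'| ≤ (4 * M * Real.sqrt p * H) * ‖θ - θ'‖ := by
  have h1 := dphi_diff_eq (φ := φ) x θ θ'
  have hlip := hgradlip θ' hθ' θ hθ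
  have h2 : dphi φ θ' θ ≤ H * ‖θ' - θ‖ * ‖θ' - θ‖ := by
    have hadd := dphi_add_dphi (φ := φ) θ' θ
    have hnn := dphi_nonneg hconv hφ θ θ'
    have hcs : (inner ℝ (gradient φ θ' - gradient φ θ) (θ' - θ) : ℝ) ≤
        ‖gradient φ θ' - gradient φ θ‖ * ‖θ' - θ‖ := real_inner_le_norm _ _
    nlinarith [norm_nonneg (θ' - θ)]
  have h3 : |(inner ℝ (gradient φ θ' - gradient φ θ) (x - θ') : ℝ)| ≤
      (H * ‖θ' - θ‖) * ‖x - θ'‖ := by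
    calc |(inner ℝ (gradient φ θ' - gradient φ θ) (x - θ') : ℝ)|
        ≤ ‖gradient φ θ' - gradient φ θ‖ * ‖x - θ'‖ := abs_real_inner_le_norm _ _
      _ ≤ (H * ‖θ' - θ‖) * ‖x - θ'‖ :=
          mul_le_mul_of_nonneg_right hlip (norm_nonneg _)
  have hb1 : ‖θ' - θ‖ ≤ 2 * M * Real.sqrt p := norm_sub_le_of_mem_cube hM hθ' hθ
  have hb2 : ‖x - θ'‖ ≤ 2 * M * Real.sqrt p := norm_sub_le_of_mem_cube hM hx hθ'
  have hnn' := dphi_nonneg hconv hφ θ' θ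
  have hrev : ‖θ - θ'‖ = ‖θ' - θ‖ := norm_sub_rev θ θ'
  rw [h1, hrev]
  calc |dphi φ θ' θ + (inner ℝ (gradient φ θ' - gradient φ θ) (x - θ') : ℝ)|
      ≤ dphi φ θ' θ + |(inner ℝ (gradient φ θ' - gradient φ θ) (x - θ') : ℝ)| := by
        calc |dphi φ θ' θ + (inner ℝ (gradient φ θ' - gradient φ θ) (x - θ') : ℝ)|
            ≤ |dphi φ θ' θ| + |(inner ℝ (gradient φ θ' - gradient φ θ) (x - θ') : ℝ)| :=
              abs_add_le _ _
          _ = _ := by rw [abs_of_nonneg hnn']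
    _ ≤ H * ‖θ' - θ‖ * ‖θ' - θ‖ + (H * ‖θ' - θ‖) * ‖x - θ'‖ := add_le_add h2 h3
    _ ≤ (4 * M * Real.sqrt p * H) * ‖θ' - θ‖ := by
        nlinarith [mul_nonneg hH (norm_nonneg (θ' - θ)), norm_nonneg (θ' - θ),
          norm_nonneg (x - θ'), Real.sqrt_nonneg (p : ℝ), mul_nonneg hM (Real.sqrt_nonneg (p:ℝ))]

noncomputable def fThetaAux {p k : ℕ} (φ : EuclideanSpace ℝ (Fin p) → ℝ)
    (Ψ : (Fin k → ℝ) → ℝ) (Θ : Fin k → EuclideanSpace ℝ (Fin p))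
    (x : EuclideanSpace ℝ (Fin p)) : ℝ :=
  Ψ (fun j => dphi φ x (Θ j))

lemma fThetaAux_continuous (hconv : ConvexOn ℝ Set.univ φ) (hφ : Differentiable ℝ φ)
    {τ : ℝ} (Ψ : (Fin k → ℝ) → ℝ)
    (hΨlip : ∀ u v : Fin k → ℝ, (∀ j, 0 ≤ u j) → (∀ j, 0 ≤ v j) →
      |Ψ u - Ψ v| ≤ τ * ∑ j, |u j - v j|)
    (Θ : Fin k → EuclideanSpace ℝ (Fin p)) :
    Continuous (fThetaAux φ Ψ Θ) := by
  rw [continuous_iff_continuousAt]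
  intro x₀
  have hc : Continuous fun x => τ * ∑ j, |dphi φ x (Θ j) - dphi φ x₀ (Θ j)| := by
    apply continuous_const.mul
    apply continuous_finset_sum
    intro j _
    exact ((continuous_dphi_left hφ (Θ j)).sub continuous_const).abs
  have hg : Tendsto (fun x => τ * ∑ j, |dphi φ x (Θ j) - dphi φ x₀ (Θ j)|) (𝓝 x₀) (𝓝 0) := by
    have h0 : τ * ∑ j, |dphi φ x₀ (Θ j) - dphi φ x₀ (Θ j)| = 0 := by simp
    simpa [h0] using hc.tendsto x₀
  have hsq : Tendsto (fun x => fThetaAux φ Ψ Θ x - fThetaAux φ Ψ Θ x₀) (𝓝 x₀) (𝓝 0) := by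
    apply squeeze_zero_norm _ hg
    intro x
    rw [Real.norm_eq_abs]
    exact hΨlip _ _ (fun j => dphi_nonneg hconv hφ _ _) (fun j => dphi_nonneg hconv hφ _ _)
  have hconst : Tendsto (fun _ : EuclideanSpace ℝ (Fin p) => fThetaAux φ Ψ Θ x₀) (𝓝 x₀)
      (𝓝 (fThetaAux φ Ψ Θ x₀)) := tendsto_const_nhds
  have := hsq.add hconst
  unfold ContinuousAt
  simpa using this

end lip

open scoped Topology in
theorem fTheta_eq_fThetaAux {p k : ℕ} (φ : EuclideanSpace ℝ (Fin p) → ℝ)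
    (Ψ : (Fin k → ℝ) → ℝ) (Θ : Fin k → EuclideanSpace ℝ (Fin p)) :
    fTheta φ Ψ Θ = fThetaAux φ Ψ Θ := rfl

/-- The population risk attains its global infimum (over all of `(ℝ^p)^k`)
at some configuration of centroids lying in `([-M,M]^p)^k`; in particular the
infimum over all configurations equals the infimum over the cube. -/
theorem exists_min_in_cube
    {p k : ℕ} (hp : 0 < p) (hk : 0 < k) {M : ℝ} (hM : 0 < M)
    (φ : EuclideanSpace ℝ (Fin p) → ℝ)
    (hφconv : ConvexOn ℝ Set.univ φ) (hφdiff : Differentiable ℝ φ)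
    (hφzero : φ 0 = 0) (hgradzero : gradient φ 0 = 0)
    {H : ℝ} (hH : 0 ≤ H)
    (hgradlip : ∀ x ∈ cube p M, ∀ y ∈ cube p M,
      ‖gradient φ x - gradient φ y‖ ≤ H * ‖x - y‖)
    (Ψ : (Fin k → ℝ) → ℝ)
    (hΨnonneg : ∀ u : Fin k → ℝ, (∀ j, 0 ≤ u j) → 0 ≤ Ψ u)
    (hΨmono : ∀ u v : Fin k → ℝ, (∀ j, 0 ≤ u j) → (∀ j, u j ≤ v j) → Ψ u ≤ Ψ v)
    (hΨzero : Ψ 0 = 0)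
    {τ : ℝ} (hτ : 0 < τ)
    (hΨlip : ∀ u v : Fin k → ℝ, (∀ j, 0 ≤ u j) → (∀ j, 0 ≤ v j) →
      |Ψ u - Ψ v| ≤ τ * ∑ j, |u j - v j|)
    (Q : Measure (EuclideanSpace ℝ (Fin p))) [IsProbabilityMeasure Q]
    (hQ : Q (cube p M) = 1) :
    ∃ Θ₀ : Fin k → EuclideanSpace ℝ (Fin p),
      (∀ j, Θ₀ j ∈ cube p M) ∧
      (∀ Θ : Fin k → EuclideanSpace ℝ (Fin p),
        ∫ x, fTheta φ Ψ Θ₀ x ∂Q ≤ ∫ x, fTheta φ Ψ Θ x ∂Q) ∧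
      sInf ((fun Θ => ∫ x, fTheta φ Ψ Θ x ∂Q) '' Set.univ) =
        sInf ((fun Θ => ∫ x, fTheta φ Ψ Θ x ∂Q) ''
          {Θ : Fin k → EuclideanSpace ℝ (Fin p) | ∀ j, Θ j ∈ cube p M}) ∧
      sInf ((fun Θ => ∫ x, fTheta φ Ψ Θ x ∂Q) '' Set.univ) =
        ∫ x, fTheta φ Ψ Θ₀ x ∂Q := by
  classical
  set S : Set (Fin k → EuclideanSpace ℝ (Fin p)) :=
    {Θ : Fin k → EuclideanSpace ℝ (Fin p) | ∀ j, Θ j ∈ cube p M} with hS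
  have hM0 : (0:ℝ) ≤ M := hM.le
  have hcube_ae : ∀ᵐ x ∂Q, x ∈ cube p M := by
    rw [MeasureTheory.ae_iff]
    have heq : {x | ¬ x ∈ cube p M} = (cube p M)ᶜ := rfl
    rw [heq, measure_compl isClosed_cube.measurableSet (measure_ne_top Q _), measure_univ, hQ]
    simp
  have hint : ∀ Θ : Fin k → EuclideanSpace ℝ (Fin p), Integrable (fTheta φ Ψ Θ) Q := by
    intro Θ
    have hc : Continuous (fTheta φ Ψ Θ) := by
      rw [fTheta_eq_fThetaAux]
      exact fThetaAux_continuous hφconv hφdiff Ψ hΨlip Θ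
    obtain ⟨C, hC⟩ := (isCompact_cube hM0).exists_bound_of_continuousOn hc.continuousOn
    refine Integrable.mono' (integrable_const C) hc.aestronglyMeasurable ?_
    filter_upwards [hcube_ae] with x hx using hC x hx
  set R : (Fin k → EuclideanSpace ℝ (Fin p)) → ℝ := fun Θ => ∫ x, fTheta φ Ψ Θ x ∂Q with hR
  set C : ℝ := 4 * M * Real.sqrt p * H with hCdef
  have hC0 : 0 ≤ C := by positivity
  set L : ℝ := τ * ((k : ℝ) * C) with hLdef
  have hL0 : 0 ≤ L := by positivity
  have hflip : ∀ Θ ∈ S, ∀ Θ' ∈ S, ∀ x ∈ cube p M,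
      |fTheta φ Ψ Θ x - fTheta φ Ψ Θ' x| ≤ L * dist Θ Θ' := by
    intro Θ hΘ Θ' hΘ' x hx
    have h1 : |fTheta φ Ψ Θ x - fTheta φ Ψ Θ' x| ≤
        τ * ∑ j, |dphi φ x (Θ j) - dphi φ x (Θ' j)| :=
      hΨlip _ _ (fun j => dphi_nonneg hφconv hφdiff _ _)
        (fun j => dphi_nonneg hφconv hφdiff _ _)
    have h2 : ∑ j, |dphi φ x (Θ j) - dphi φ x (Θ' j)| ≤ (k : ℝ) * (C * dist Θ Θ') := by
      calc ∑ j, |dphi φ x (Θ j) - dphi φ x (Θ' j)|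
          ≤ ∑ _j : Fin k, C * dist Θ Θ' := by
            refine Finset.sum_le_sum fun j _ => ?_
            calc |dphi φ x (Θ j) - dphi φ x (Θ' j)| ≤ C * ‖Θ j - Θ' j‖ :=
                  dphi_lip hφconv hφdiff hM0 hH hgradlip hx (hΘ j) (hΘ' j)
              _ ≤ C * dist Θ Θ' := by
                  refine mul_le_mul_of_nonneg_left ?_ hC0
                  rw [← dist_eq_norm]
                  exact dist_le_pi_dist Θ Θ' j
        _ = (k : ℝ) * (C * dist Θ Θ') := by
            rw [Finset.sum_const, Finset.card_univ, Fintype.card_fin, nsmul_eq_mul]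
    calc |fTheta φ Ψ Θ x - fTheta φ Ψ Θ' x|
        ≤ τ * ((k : ℝ) * (C * dist Θ Θ')) :=
          le_trans h1 (mul_le_mul_of_nonneg_left h2 hτ.le)
      _ = L * dist Θ Θ' := by rw [hLdef]; ring
  have hRlip : ∀ Θ ∈ S, ∀ Θ' ∈ S, dist (R Θ) (R Θ') ≤ L * dist Θ Θ' := by
    intro Θ hΘ Θ' hΘ'
    rw [Real.dist_eq, hR]
    simp only
    rw [← integral_sub (hint Θ) (hint Θ')]
    calc |∫ x, (fTheta φ Ψ Θ x - fTheta φ Ψ Θ' x) ∂Q|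
        ≤ ∫ x, |fTheta φ Ψ Θ x - fTheta φ Ψ Θ' x| ∂Q := by
          have := norm_integral_le_integral_norm (μ := Q)
            (f := fun x => fTheta φ Ψ Θ x - fTheta φ Ψ Θ' x)
          simpa [Real.norm_eq_abs] using this
      _ ≤ ∫ _x, L * dist Θ Θ' ∂Q := by
          refine integral_mono_ae ((hint Θ).sub (hint Θ')).abs (integrable_const _) ?_
          filter_upwards [hcube_ae] with x hx using hflip Θ hΘ Θ' hΘ' x hx
      _ = L * dist Θ Θ' := by simp
  have hRcont : ContinuousOn R S := by
    have hlw := LipschitzOnWith.of_dist_le_mul (K := L.toNNReal) (f := R) (s := S)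
      (fun x hx y hy => by rw [Real.coe_toNNReal L hL0]; exact hRlip x hx y hy)
    exact hlw.continuousOn
  have hScomp : IsCompact S := by
    have hSeq : S = Set.univ.pi (fun _ : Fin k => cube p M) := by
      ext Θ; simp [hS, Set.mem_pi]
    rw [hSeq]
    exact isCompact_univ_pi fun _ => isCompact_cube hM0
  have hSne : S.Nonempty := ⟨fun _ => 0, fun j => zero_mem_cube hM0⟩
  obtain ⟨Θ₀, hΘ₀S, hΘ₀min⟩ := hScomp.exists_isMinOn hSne hRcont
  have hglobal : ∀ Θ, R Θ₀ ≤ R Θ := by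
    intro Θ
    choose Θ' hΘ'mem hΘ'le using fun j => exists_bregman_proj hφconv hφdiff hM0 (Θ j)
    have hΘ'S : Θ' ∈ S := hΘ'mem
    have hRle : R Θ' ≤ R Θ := by
      refine integral_mono_ae (hint Θ') (hint Θ) ?_
      filter_upwards [hcube_ae] with x hx
      show Ψ (fun j => dphi φ x (Θ' j)) ≤ Ψ (fun j => dphi φ x (Θ j))
      exact hΨmono _ _ (fun j => dphi_nonneg hφconv hφdiff _ _) (fun j => hΘ'le j x hx)
    exact le_trans (isMinOn_iff.mp hΘ₀min Θ' hΘ'S) hRle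
  have hmemU : R Θ₀ ∈ R '' Set.univ := ⟨Θ₀, Set.mem_univ _, rfl⟩
  have hlbU : ∀ y ∈ R '' Set.univ, R Θ₀ ≤ y := by
    rintro y ⟨Θ, -, rfl⟩; exact hglobal Θ
  have hmemS : R Θ₀ ∈ R '' S := ⟨Θ₀, hΘ₀S, rfl⟩
  have hlbS : ∀ y ∈ R '' S, R Θ₀ ≤ y := by
    rintro y ⟨Θ, -, rfl⟩; exact hglobal Θ
  have h1 : sInf (R '' Set.univ) = R Θ₀ :=
    le_antisymm (csInf_le ⟨R Θ₀, hlbU⟩ hmemU) (le_csInf ⟨R Θ₀, hmemU⟩ hlbU)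
  have h2 : sInf (R '' S) = R Θ₀ :=
    le_antisymm (csInf_le ⟨R Θ₀, hlbS⟩ hmemS) (le_csInf ⟨R Θ₀, hmemS⟩ hlbS)
  exact ⟨Θ₀, hΘ₀S, hglobal, h1.trans h2.symm, h1⟩
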